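/- Let X be a Banach space, f : X → ℝ ∪ {+∞} proper lower semicontinuous and bounded below on an open, convex, bounded set U with dom f ∩ U ≠ ∅, and let g : U → ℝ be convex, continuous, bounded below, with g(x) → +∞ as x → ∂U. Then inf_U (f+g) is finite, and for every ε > 0 there exists y ∈ U such that f(y) + g(y) < inf_U(f+g) + ε and the function x ↦ f(x) + g(x) + ε‖x − y‖ attains its minimum over U at y. -/

import Mathlib

open Metric Set Filter

private lemma ekeland_real {Y : Type*} [MetricSpace Y] [CompleteSpace Y] (h : Y → ℝ)
    (hlsc : LowerSemicontinuous h) (m : ℝ) (hm : ∀ x, m ≤ h x) (ε : ℝ) (hε : 0 < ε)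
    (x₀ : Y) : ∃ y, h y ≤ h x₀ ∧ ∀ x, h y ≤ h x + ε * dist x y := by
  classical
  set S : Y → Set Y := fun x => {z | h z + ε * dist z x ≤ h x} with hS
  have hmem : ∀ x, x ∈ S x := by intro x; simp [hS]
  have hbdd : ∀ x, BddBelow (h '' S x) := fun x => ⟨m, by rintro _ ⟨z, _, rfl⟩; exact hm z⟩
  have htrans : ∀ x z, z ∈ S x → S z ⊆ S x := by
    intro x z hz w hw
    simp only [hS, mem_setOf_eq] at *
    have := dist_triangle w z x
    nlinarith
  have hSclosed : ∀ x, IsClosed (S x) := by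
    intro x
    have : LowerSemicontinuous fun z => h z + ε * dist z x :=
      hlsc.add ((continuous_const.mul (continuous_id.dist continuous_const)).lowerSemicontinuous)
    exact this.isClosed_preimage (h x)
  have key : ∀ (x : Y) (n : ℕ), ∃ z, z ∈ S x ∧ h z < sInf (h '' S x) + (1/2)^n := by
    intro x n
    obtain ⟨_, ⟨z, hz, rfl⟩, hlt⟩ :=
      Real.lt_sInf_add_pos (⟨h x, x, hmem x, rfl⟩ : (h '' S x).Nonempty)
        (by positivity : (0:ℝ) < (1/2)^n)
    exact ⟨z, hz, hlt⟩
  choose next hnext1 hnext2 using key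
  set u : ℕ → Y := fun n => Nat.rec x₀ (fun n xn => next xn n) n with hu
  have huS : ∀ n, u (n+1) ∈ S (u n) := fun n => hnext1 (u n) n
  have hchain : ∀ n p, u (n + p) ∈ S (u n) := by
    intro n p
    induction p with
    | zero => exact hmem (u n)
    | succ p ih =>
      exact htrans (u n) (u (n+p)) ih (htrans _ _ (hmem _) (huS (n+p)))
  have hchain' : ∀ n p, n ≤ p → u p ∈ S (u n) := by
    intro n p hnp
    obtain ⟨q, rfl⟩ := Nat.exists_eq_add_of_le hnp
    exact hchain n q
  -- key distance estimate
  have hdist : ∀ n, ∀ z ∈ S (u (n+1)), ε * dist z (u (n+1)) ≤ (1/2)^n := by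
    intro n z hz
    have hz' : z ∈ S (u n) := htrans _ _ (huS n) hz
    have h1 : sInf (h '' S (u n)) ≤ h z := csInf_le (hbdd _) ⟨z, hz', rfl⟩
    have h2 : h (u (n+1)) < sInf (h '' S (u n)) + (1/2)^n := hnext2 (u n) n
    have h3 : h z + ε * dist z (u (n+1)) ≤ h (u (n+1)) := hz
    linarith
  have hcauchy : CauchySeq u := by
    rw [Metric.cauchySeq_iff']
    intro E hE
    obtain ⟨n, hn⟩ := exists_pow_lt_of_lt_one (by positivity : (0:ℝ) < ε * E)
      (by norm_num : (1:ℝ)/2 < 1)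
    refine ⟨n+1, fun p hp => ?_⟩
    have := hdist n (u p) (hchain' (n+1) p hp)
    have : ε * dist (u p) (u (n+1)) < ε * E := lt_of_le_of_lt this hn
    exact lt_of_mul_lt_mul_left this hε.le
  obtain ⟨y, hy⟩ := cauchySeq_tendsto_of_complete hcauchy
  have hyS : ∀ n, y ∈ S (u n) := by
    intro n
    refine (hSclosed (u n)).mem_of_tendsto hy ?_
    filter_upwards [eventually_ge_atTop n] with p hp
    exact hchain' n p hp
  refine ⟨y, ?_, ?_⟩
  · have h0 := hyS 0
    simp only [hS, mem_setOf_eq] at h0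
    have hu0 : u 0 = x₀ := rfl
    rw [hu0] at h0
    nlinarith [dist_nonneg (x:=y) (y:=x₀)]
  · intro x
    by_contra hlt
    push_neg at hlt
    have hxSy : x ∈ S y := le_of_lt hlt
    have hxy : x = y := by
      have hd : ∀ n, dist x (u (n+1)) ≤ (1/2)^n / ε := by
        intro n
        have := hdist n x (htrans _ _ (hyS (n+1)) hxSy)
        rw [div_eq_inv_mul]
        calc dist x (u (n+1)) = ε⁻¹ * (ε * dist x (u (n+1))) := by
              field_simp
          _ ≤ ε⁻¹ * (1/2)^n := by
              apply mul_le_mul_of_nonneg_left this (by positivity)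
          _ = ε⁻¹ * (1/2)^n := rfl
      have t1 : Tendsto (fun n => dist x (u (n+1))) atTop (nhds (dist x y)) :=
        ((continuous_const.dist continuous_id).continuousAt.tendsto.comp (hy.comp (tendsto_add_atTop_nat 1)))
      have t2 : Tendsto (fun n : ℕ => ((1:ℝ)/2)^n / ε) atTop (nhds 0) := by
        have := tendsto_pow_atTop_nhds_zero_of_lt_one (by norm_num : (0:ℝ) ≤ 1/2)
          (by norm_num : (1:ℝ)/2 < 1)
        simpa using this.div_const ε
      have : dist x y ≤ 0 := le_of_tendsto_of_tendsto' t1 t2 hd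
      exact dist_le_zero.mp this
    rw [hxy] at hlt
    simp at hlt

private lemma ekeland_ereal {X : Type*} [MetricSpace X] [CompleteSpace X]
    (H : X → EReal) (hlsc : LowerSemicontinuous H) (m : ℝ) (hm : ∀ x, (m : EReal) ≤ H x)
    (x₀ : X) (h₀ : H x₀ ≠ ⊤) (ε : ℝ) (hε : 0 < ε) :
    ∃ y, H y ≤ H x₀ ∧ ∀ x, H y ≤ H x + ((ε * dist x y : ℝ) : EReal) := by
  classical
  set D : Set X := {x | H x ≤ H x₀} with hD
  have hDclosed : IsClosed D := hlsc.isClosed_preimage (H x₀)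
  have hx₀D : x₀ ∈ D := by simp [hD]
  haveI : CompleteSpace D := hDclosed.completeSpace_coe
  have hfin : ∀ x : D, H x.1 ≠ ⊤ ∧ H x.1 ≠ ⊥ := by
    intro x
    refine ⟨fun ht => h₀ (top_le_iff.mp (ht ▸ x.2)), fun hb => (EReal.coe_ne_bot m) ?_⟩
    exact le_bot_iff.mp (hb ▸ hm x.1)
  set h : D → ℝ := fun x => (H x.1).toReal with hh
  have hcoe : ∀ x : D, H x.1 = ((h x : ℝ) : EReal) :=
    fun x => (EReal.coe_toReal (hfin x).1 (hfin x).2).symm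
  have hlsc' : LowerSemicontinuous h := by
    intro x c hc
    have hc' : ((c:ℝ):EReal) < H x.1 := by
      rw [hcoe x]; exact_mod_cast hc
    have hev : ∀ᶠ z : D in nhds x, (c : EReal) < H z.1 :=
      (continuous_subtype_val.tendsto x).eventually (hlsc x.1 c hc')
    filter_upwards [hev] with z hz
    have := hcoe z
    rw [this] at hz
    exact_mod_cast hz
  have hm' : ∀ x : D, m ≤ h x := by
    intro x
    have := hm x.1
    rw [hcoe x] at this
    exact_mod_cast this
  obtain ⟨y, hy1, hy2⟩ := ekeland_real h hlsc' m hm' ε hε ⟨x₀, hx₀D⟩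
  refine ⟨y.1, ?_, ?_⟩
  · rw [hcoe y, hcoe ⟨x₀, hx₀D⟩]
    exact_mod_cast hy1
  · intro x
    by_cases hx : H x ≤ H x₀
    · have := hy2 ⟨x, hx⟩
      rw [hcoe y, hcoe ⟨x, hx⟩]
      rw [Subtype.dist_eq] at this
      exact_mod_cast this
    · have h1 : H y.1 ≤ H x := by
        calc H y.1 ≤ H x₀ := by rw [hcoe y, hcoe ⟨x₀, hx₀D⟩]; exact_mod_cast hy1
          _ ≤ H x := le_of_not_ge hx
      refine h1.trans (le_add_of_nonneg_right ?_)
      exact_mod_cast mul_nonneg hε.le dist_nonneg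

theorem ekeland_with_barrier {X : Type*} [NormedAddCommGroup X] [NormedSpace ℝ X]
    [CompleteSpace X]
    (f : X → EReal) (hf : LowerSemicontinuous f) (hfbot : ∀ x, f x ≠ ⊥)
    (U : Set X) (hUo : IsOpen U) (hUc : Convex ℝ U) (hUb : Bornology.IsBounded U)
    (hfb : ∃ m : ℝ, ∀ x ∈ U, (m : EReal) ≤ f x)
    (hdom : ∃ x ∈ U, f x ≠ ⊤)
    (g : X → ℝ) (hgc : ConvexOn ℝ U g) (hgcont : ContinuousOn g U)
    (hgb : BddBelow (g '' U))
    (hbar : ∀ M : ℝ, ∃ δ > 0, ∀ x ∈ U, Metric.infDist x (frontier U) < δ → M < g x) :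
    sInf ((fun x => f x + ((g x : ℝ) : EReal)) '' U) ≠ ⊤ ∧
    sInf ((fun x => f x + ((g x : ℝ) : EReal)) '' U) ≠ ⊥ ∧
    ∀ ε > (0:ℝ), ∃ y ∈ U,
      f y + ((g y : ℝ) : EReal) < sInf ((fun x => f x + ((g x : ℝ) : EReal)) '' U) + (ε : EReal) ∧
      ∀ x ∈ U, f y + ((g y : ℝ) : EReal) ≤ f x + ((g x : ℝ) : EReal) + ((ε * ‖x - y‖ : ℝ) : EReal) := by
  classical
  obtain ⟨mf, hmf⟩ := hfb
  obtain ⟨mg, hmg⟩ := hgb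
  have hmgU : ∀ x ∈ U, mg ≤ g x := fun x hx => hmg ⟨x, hx, rfl⟩
  set F : X → EReal := fun x => f x + ((g x : ℝ) : EReal) with hF
  set H : X → EReal := fun x => if x ∈ U then F x else ⊤ with hH
  have hFlb : ∀ x ∈ U, ((mf + mg : ℝ) : EReal) ≤ F x := by
    intro x hx
    have h2 : ((mg:ℝ):EReal) ≤ ((g x : ℝ):EReal) := by exact_mod_cast hmgU x hx
    calc ((mf+mg:ℝ):EReal) = (mf:EReal) + (mg:EReal) := by rw [EReal.coe_add]
      _ ≤ f x + ((g x : ℝ):EReal) := add_le_add (hmf x hx) h2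
  have hHlb : ∀ x, ((mf + mg : ℝ) : EReal) ≤ H x := by
    intro x
    by_cases hx : x ∈ U
    · rw [hH]; simp only [if_pos hx]; exact hFlb x hx
    · rw [hH]; simp only [if_neg hx]; exact le_top
  have hHlsc : LowerSemicontinuous H := by
    intro x
    by_cases hx : x ∈ U
    · have hgc' : ContinuousAt (fun z => ((g z : ℝ) : EReal)) x :=
        (continuous_coe_real_ereal.continuousAt).comp (hgcont.continuousAt (hUo.mem_nhds hx))
      have hFlsc : LowerSemicontinuousAt F x :=
        LowerSemicontinuousAt.add' (hf x) hgc'.lowerSemicontinuousAt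
          (EReal.continuousAt_add (Or.inr (EReal.coe_ne_bot _)) (Or.inl (hfbot x)))
      intro c hc
      rw [hH] at hc; simp only [if_pos hx] at hc
      filter_upwards [hFlsc c hc, hUo.mem_nhds hx] with z h1 h2
      rw [hH]; simp only [if_pos h2]; exact h1
    · intro c hc
      have hcT : c < ⊤ := lt_of_lt_of_le hc le_top
      by_cases hx2 : x ∈ closure U
      · have hxf : x ∈ frontier U := by
          rw [frontier, hUo.interior_eq]
          exact ⟨hx2, hx⟩
        set M : ℝ := c.toReal + 1 with hM
        have hcM : c < (M:EReal) := by
          rcases eq_or_ne c ⊥ with rfl | hcb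
          · exact bot_lt_iff_ne_bot.mpr (EReal.coe_ne_bot M)
          · rw [← EReal.coe_toReal (lt_top_iff_ne_top.mp hcT) hcb]
            exact_mod_cast (by linarith : c.toReal < M)
        obtain ⟨δ, hδ, hδbar⟩ := hbar (M - mf)
        filter_upwards [Metric.ball_mem_nhds x hδ] with z hz
        by_cases hzU : z ∈ U
        · have hinf : infDist z (frontier U) < δ :=
            lt_of_le_of_lt (infDist_le_dist_of_mem hxf) (by rwa [mem_ball] at hz)
          have hg : M - mf < g z := hδbar z hzU hinf
          have h1 : ((mf + g z:ℝ):EReal) ≤ F z := by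
            calc ((mf + g z:ℝ):EReal) = (mf:EReal) + ((g z:ℝ):EReal) := by rw [EReal.coe_add]
              _ ≤ f z + ((g z : ℝ):EReal) := add_le_add (hmf z hzU) le_rfl
          have h2 : (M:EReal) < ((mf + g z : ℝ):EReal) := by exact_mod_cast (by linarith : M < mf + g z)
          rw [hH]; simp only [if_pos hzU]
          exact hcM.trans (h2.trans_le h1)
        · rw [hH]; simp only [if_neg hzU]; exact hcT
      · filter_upwards [(isOpen_compl_iff.mpr isClosed_closure).mem_nhds hx2] with z hz
        have hzU : z ∉ U := fun h => hz (subset_closure h)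
        rw [hH]; simp only [if_neg hzU]; exact hcT
  obtain ⟨xb, hxbU, hxb⟩ := hdom
  have hFxb : F xb ≠ ⊤ := by
    rw [hF]; exact lt_top_iff_ne_top.mp (EReal.add_lt_top hxb (EReal.coe_ne_top _))
  set A : EReal := sInf (F '' U) with hA
  have hAle : A ≤ F xb := sInf_le ⟨xb, hxbU, rfl⟩
  have hAtop : A ≠ ⊤ := ne_top_of_le_ne_top hFxb hAle
  have hAlb : ((mf + mg : ℝ) : EReal) ≤ A := le_sInf (by rintro _ ⟨x, hx, rfl⟩; exact hFlb x hx)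
  have hAbot : A ≠ ⊥ := fun h => EReal.coe_ne_bot _ (le_bot_iff.mp (h ▸ hAlb))
  refine ⟨hAtop, hAbot, ?_⟩
  intro ε hε
  set a : ℝ := A.toReal with ha
  have hAa : A = (a:EReal) := (EReal.coe_toReal hAtop hAbot).symm
  have hAε : A < A + (ε:EReal) := by
    rw [hAa, ← EReal.coe_add]
    exact_mod_cast (by linarith : a < a + ε)
  obtain ⟨_, ⟨x₀, hx₀U, rfl⟩, hx₀lt⟩ := sInf_lt_iff.mp (hA ▸ hAε)
  have hHx₀ : H x₀ = F x₀ := by rw [hH]; simp only [if_pos hx₀U]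
  have hHx₀top : H x₀ ≠ ⊤ := by
    rw [hHx₀]
    exact lt_top_iff_ne_top.mp (lt_of_lt_of_le hx₀lt le_top)
  obtain ⟨y, hy1, hy2⟩ := ekeland_ereal H hHlsc (mf + mg) hHlb x₀ hHx₀top ε hε
  have hyU : y ∈ U := by
    by_contra hyU
    have : H y = ⊤ := by rw [hH]; simp only [if_neg hyU]
    exact hHx₀top (top_le_iff.mp (this ▸ hy1))
  have hHy : H y = F y := by rw [hH]; simp only [if_pos hyU]
  refine ⟨y, hyU, ?_, ?_⟩
  · calc F y = H y := hHy.symm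
      _ ≤ H x₀ := hy1
      _ = F x₀ := hHx₀
      _ < A + (ε:EReal) := hx₀lt
  · intro x hx
    have := hy2 x
    rw [hHy, hH] at this
    simp only [if_pos hx] at this
    rwa [dist_eq_norm] at this
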